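/- arXiv:1302.3201 — 2 statements merged into one kernel-verified Lean document; each statement's English description precedes it below -/
import Mathlib

section
/- There exists a z-filter 𝒜 on Lmc(ℝ,+) such that E(E⁻(𝒜)) is properly contained in 𝒜. Concretely, for the maximal ideal M₀ = {f ∈ Lmc(ℝ) : f(0) = 0}, the z-filter 𝒜 = {Z(f) : f ∈ M₀} satisfies {0} ∈ 𝒜 but {0} ∉ E(E⁻(𝒜)). -/
open scoped BoundedContinuousFunction
open WeakDual

/-- A semitopological semigroup: multiplication is separately continuous. -/
class SemitopologicalSemigroup (S : Type*) [TopologicalSpace S] [Mul S] : Prop where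
  continuous_mul_left : ∀ s : S, Continuous fun x : S => s * x
  continuous_mul_right : ∀ s : S, Continuous fun x : S => x * s

/-- Left translate `L_s f (x) = f (s x)` as a bounded continuous function. -/
noncomputable def lTrans {S : Type*} [TopologicalSpace S] [Mul S] [SemitopologicalSemigroup S]
    (s : S) (f : S →ᵇ ℂ) : S →ᵇ ℂ :=
  f.compContinuous ⟨fun x => s * x, SemitopologicalSemigroup.continuous_mul_left s⟩

/-- The left multiplicatively continuous functions: `f ∈ Lmc S` iff `T_μ f` is (bounded)
continuous for every character `μ` of `CB(S) = S →ᵇ ℂ` (i.e. every `μ ∈ βS`). -/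
def Lmc (S : Type*) [TopologicalSpace S] [Mul S] [SemitopologicalSemigroup S] :
    Set (S →ᵇ ℂ) :=
  {f | ∀ μ : characterSpace ℂ (S →ᵇ ℂ), Continuous fun s : S => (μ (lTrans s f) : ℂ)}

/-- `E_ε(f) = {x ∈ S : |f x| ≤ ε}`. -/
def Eset {S : Type*} [TopologicalSpace S] (ε : ℝ) (f : S →ᵇ ℂ) : Set S :=
  {x : S | ‖f x‖ ≤ ε}

/-- A zero set of `Lmc S`: `Z(f) = f⁻¹({0})` for some `f ∈ Lmc S`. -/
def IsZeroSet {S : Type*} [TopologicalSpace S] [Mul S] [SemitopologicalSemigroup S]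
    (A : Set S) : Prop :=
  ∃ f ∈ Lmc S, A = {x : S | f x = 0}

/-- `E(I) = {E_ε(f) : f ∈ I, ε > 0}`. -/
def Efam {S : Type*} [TopologicalSpace S] [Mul S] [SemitopologicalSemigroup S]
    (I : Set (S →ᵇ ℂ)) : Set (Set S) :=
  {A | ∃ f ∈ I, ∃ ε : ℝ, 0 < ε ∧ A = Eset ε f}

/-- `E⁻(𝒜) = {f ∈ Lmc S : E_ε(f) ∈ 𝒜 for all ε > 0}`. -/
def Einv {S : Type*} [TopologicalSpace S] [Mul S] [SemitopologicalSemigroup S]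
    (𝒜 : Set (Set S)) : Set (S →ᵇ ℂ) :=
  {f | f ∈ Lmc S ∧ ∀ ε : ℝ, 0 < ε → Eset ε f ∈ 𝒜}

/-- A `z`-filter on `Lmc S`. -/
structure IsZFilter {S : Type*} [TopologicalSpace S] [Mul S] [SemitopologicalSemigroup S]
    (𝒜 : Set (Set S)) : Prop where
  zero_sets : ∀ A ∈ 𝒜, IsZeroSet A
  not_empty_mem : ∅ ∉ 𝒜
  univ_mem : Set.univ ∈ 𝒜
  inter_mem : ∀ A ∈ 𝒜, ∀ B ∈ 𝒜, A ∩ B ∈ 𝒜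
  superset_mem : ∀ A ∈ 𝒜, ∀ B : Set S, IsZeroSet B → A ⊆ B → B ∈ 𝒜

/-- An ideal of the algebra `Lmc S`. -/
structure IsIdealLmc {S : Type*} [TopologicalSpace S] [Mul S] [SemitopologicalSemigroup S]
    (I : Set (S →ᵇ ℂ)) : Prop where
  subset_lmc : I ⊆ Lmc S
  zero_mem : (0 : S →ᵇ ℂ) ∈ I
  add_mem : ∀ f ∈ I, ∀ g ∈ I, f + g ∈ I
  mul_mem : ∀ f ∈ Lmc S, ∀ g ∈ I, f * g ∈ I

/-- A maximal (proper) ideal of `Lmc S`. -/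
def IsMaximalIdealLmc {S : Type*} [TopologicalSpace S] [Mul S] [SemitopologicalSemigroup S]
    (M : Set (S →ᵇ ℂ)) : Prop :=
  IsIdealLmc M ∧ M ≠ Lmc S ∧ ∀ J, IsIdealLmc J → J ≠ Lmc S → M ⊆ J → J = M

/-- An `e`-filter: a `z`-filter with `E(E⁻(𝒜)) = 𝒜`. -/
def IsEFilter {S : Type*} [TopologicalSpace S] [Mul S] [SemitopologicalSemigroup S]
    (𝒜 : Set (Set S)) : Prop :=
  IsZFilter 𝒜 ∧ Efam (Einv 𝒜) = 𝒜

/-- An `e`-ideal: an ideal with `E⁻(E(I)) = I`. -/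
def IsEIdeal {S : Type*} [TopologicalSpace S] [Mul S] [SemitopologicalSemigroup S]
    (I : Set (S →ᵇ ℂ)) : Prop :=
  IsIdealLmc I ∧ Einv (Efam I) = I

/-- An `e`-ultrafilter: a maximal `e`-filter. -/
def IsEUltrafilter {S : Type*} [TopologicalSpace S] [Mul S] [SemitopologicalSemigroup S]
    (p : Set (Set S)) : Prop :=
  IsEFilter p ∧ ∀ q, IsEFilter q → p ⊆ q → q = p

/-- The sum `p + q` of two families of zero sets: `A ∈ p + q` iff `A = E_ε(f)` for some `ε > 0`,
`f ∈ Lmc S`, with `E_δ(q, f) = {x : λ_x⁻¹(E_δ(f)) ∈ q} ∈ p` for all `δ > 0`. -/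
def eAdd {S : Type*} [TopologicalSpace S] [Mul S] [SemitopologicalSemigroup S]
    (p q : Set (Set S)) : Set (Set S) :=
  {A | ∃ ε : ℝ, 0 < ε ∧ ∃ f ∈ Lmc S, A = Eset ε f ∧
    ∀ δ : ℝ, 0 < δ → {x : S | (fun t => x * t) ⁻¹' Eset δ f ∈ q} ∈ p}

/-- The principal `e`-ultrafilter `e(a) = {E_ε(f) : f ∈ Lmc S, f a = 0, ε > 0}`. -/
def ePrinc {S : Type*} [TopologicalSpace S] [Mul S] [SemitopologicalSemigroup S]
    (a : S) : Set (Set S) :=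
  {A | ∃ f ∈ Lmc S, f a = 0 ∧ ∃ ε : ℝ, 0 < ε ∧ A = Eset ε f}

instance : SemitopologicalSemigroup (Multiplicative ℝ) :=
  ⟨fun s => continuous_mul_left s, fun s => continuous_mul_right s⟩

/-- The maximal ideal `M₀ = {f ∈ Lmc(ℝ,+) : f(0) = 0}` (the identity of `(ℝ,+)` is
`(1 : Multiplicative ℝ)`). -/
def M₀ : Set (Multiplicative ℝ →ᵇ ℂ) :=
  {f | f ∈ Lmc (Multiplicative ℝ) ∧ f (1 : Multiplicative ℝ) = 0}

/-- The `z`-filter `𝒜 = {Z(f) : f ∈ M₀}`. -/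
def zFilterA : Set (Set (Multiplicative ℝ)) :=
  {A | ∃ f ∈ M₀, A = {x : Multiplicative ℝ | f x = 0}}

section Aux

open BoundedContinuousFunction

variable {S : Type*} [TopologicalSpace S] [Mul S] [SemitopologicalSemigroup S]

lemma lTrans_apply (s : S) (f : S →ᵇ ℂ) (x : S) : lTrans s f x = f (s * x) := rfl

lemma lTrans_add (s : S) (f g : S →ᵇ ℂ) : lTrans s (f + g) = lTrans s f + lTrans s g := by
  ext x; simp [lTrans]

lemma lTrans_mul (s : S) (f g : S →ᵇ ℂ) : lTrans s (f * g) = lTrans s f * lTrans s g := by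
  ext x; simp [lTrans]

lemma lTrans_const (s : S) (c : ℂ) : lTrans s (BoundedContinuousFunction.const S c) = const S c := by
  ext x; simp [lTrans]

omit [Mul S] [SemitopologicalSemigroup S] in
lemma char_const (μ : WeakDual.characterSpace ℂ (S →ᵇ ℂ)) (c : ℂ) : μ (BoundedContinuousFunction.const S c) = c := by
  have h : (BoundedContinuousFunction.const S c) = c • (1 : S →ᵇ ℂ) := by ext x; simp
  rw [h, map_smul, map_one, smul_eq_mul, mul_one]

lemma Lmc.add {f g : S →ᵇ ℂ} (hf : f ∈ Lmc S) (hg : g ∈ Lmc S) : f + g ∈ Lmc S := by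
  intro μ
  have : (fun s : S => (μ (lTrans s (f + g)) : ℂ)) =
      fun s : S => (μ (lTrans s f) : ℂ) + (μ (lTrans s g) : ℂ) := by
    funext s; rw [lTrans_add, map_add]
  rw [this]; exact (hf μ).add (hg μ)

lemma Lmc.mul {f g : S →ᵇ ℂ} (hf : f ∈ Lmc S) (hg : g ∈ Lmc S) : f * g ∈ Lmc S := by
  intro μ
  have : (fun s : S => (μ (lTrans s (f * g)) : ℂ)) =
      fun s : S => (μ (lTrans s f) : ℂ) * (μ (lTrans s g) : ℂ) := by
    funext s; rw [lTrans_mul, map_mul]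
  rw [this]; exact (hf μ).mul (hg μ)

lemma Lmc.const (c : ℂ) : BoundedContinuousFunction.const S c ∈ Lmc S := by
  intro μ
  have : (fun s : S => (μ (lTrans s (BoundedContinuousFunction.const S c)) : ℂ)) = fun _ : S => c := by
    funext s; rw [lTrans_const, char_const]
  rw [this]; exact continuous_const

lemma Lmc.star_mem {f : S →ᵇ ℂ} (hf : f ∈ Lmc S) : star f ∈ Lmc S := by
  intro μ
  have hst : ∀ s : S, lTrans s (star f) = star (lTrans s f) := by
    intro s; ext x; simp [lTrans]
  have : (fun s : S => (μ (lTrans s (star f)) : ℂ)) =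
      fun s : S => star (μ (lTrans s f) : ℂ) := by
    funext s; rw [hst, map_star]
  rw [this]; exact continuous_star.comp (hf μ)

lemma Lmc.zero : (0 : S →ᵇ ℂ) ∈ Lmc S := by
  have h : (0 : S →ᵇ ℂ) = BoundedContinuousFunction.const S 0 := by ext x; simp
  rw [h]; exact Lmc.const 0

end Aux

section Real

open BoundedContinuousFunction

/-- The function `x ↦ min |x| 1` on `(ℝ,+)` as a bounded continuous complex function. -/
noncomputable def fmin : Multiplicative ℝ →ᵇ ℂ :=
  BoundedContinuousFunction.ofNormedAddCommGroup
    (fun x => ((min |Multiplicative.toAdd x| 1 : ℝ) : ℂ))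
    (Complex.continuous_ofReal.comp
      (((continuous_abs).comp continuous_toAdd).min continuous_const))
    1
    (by
      intro x
      rw [Complex.norm_real, Real.norm_eq_abs, abs_of_nonneg (le_min (abs_nonneg _) one_pos.le)]
      exact min_le_right _ _)

lemma fmin_apply (x : Multiplicative ℝ) :
    fmin x = ((min |Multiplicative.toAdd x| 1 : ℝ) : ℂ) := rfl

lemma abs_min_sub_min (a b c : ℝ) : |min a c - min b c| ≤ |a - b| := by
  have h3 := le_abs_self (a - b); have h4 := neg_abs_le (a - b)
  rw [abs_le]; constructor <;> simp only [min_def] <;> split_ifs <;> linarith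

lemma fmin_mem_Lmc : fmin ∈ Lmc (Multiplicative ℝ) := by
  intro μ
  have lip : LipschitzWith 1 (fun t : ℝ => lTrans (Multiplicative.ofAdd t) fmin) := by
    apply LipschitzWith.of_dist_le_mul
    intro s t
    rw [NNReal.coe_one, one_mul]
    refine (BoundedContinuousFunction.dist_le dist_nonneg).2 fun x => ?_
    rw [lTrans_apply, lTrans_apply, fmin_apply, fmin_apply,
      Complex.isometry_ofReal.dist_eq, Real.dist_eq, Real.dist_eq]
    calc |min |Multiplicative.toAdd (Multiplicative.ofAdd s * x)| 1 -
          min |Multiplicative.toAdd (Multiplicative.ofAdd t * x)| 1|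
        ≤ |(|Multiplicative.toAdd (Multiplicative.ofAdd s * x)|) -
            (|Multiplicative.toAdd (Multiplicative.ofAdd t * x)|)| := abs_min_sub_min _ _ _
      _ ≤ |Multiplicative.toAdd (Multiplicative.ofAdd s * x) -
            Multiplicative.toAdd (Multiplicative.ofAdd t * x)| := abs_abs_sub_abs_le_abs_sub _ _
      _ = |s - t| := by simp
  have hc : Continuous (fun s : Multiplicative ℝ => lTrans s fmin) := by
    have : (fun s : Multiplicative ℝ => lTrans s fmin) =
        (fun t : ℝ => lTrans (Multiplicative.ofAdd t) fmin) ∘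
          (Multiplicative.toAdd : Multiplicative ℝ → ℝ) := rfl
    rw [this]; exact lip.continuous.comp continuous_toAdd
  exact (map_continuous μ).comp hc

lemma fmin_zero_iff (x : Multiplicative ℝ) : fmin x = 0 ↔ x = 1 := by
  rw [fmin_apply, Complex.ofReal_eq_zero]
  constructor
  · intro h
    rcases min_eq_iff.1 h with ⟨h1, _⟩ | ⟨h1, _⟩
    · rw [← toAdd_eq_zero, ← abs_eq_zero]; exact h1
    · linarith
  · intro h; subst h; simp

lemma mem_one_of_mem_zFilterA {A : Set (Multiplicative ℝ)} (hA : A ∈ zFilterA) :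
    (1 : Multiplicative ℝ) ∈ A := by
  obtain ⟨f, ⟨_, hf0⟩, rfl⟩ := hA
  exact hf0

end Real

theorem stmt6 :
    IsMaximalIdealLmc M₀ ∧ IsZFilter zFilterA ∧
    ({(1 : Multiplicative ℝ)} : Set (Multiplicative ℝ)) ∈ zFilterA ∧
    ({(1 : Multiplicative ℝ)} : Set (Multiplicative ℝ)) ∉ Efam (Einv zFilterA) ∧
    Efam (Einv zFilterA) ⊂ zFilterA := by
  have hM₀ideal : IsIdealLmc M₀ := by
    refine ⟨fun f hf => hf.1, ⟨Lmc.zero, rfl⟩, ?_, ?_⟩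
    · rintro f ⟨hf, hf0⟩ g ⟨hg, hg0⟩
      exact ⟨Lmc.add hf hg, by simp [hf0, hg0]⟩
    · rintro f hf g ⟨hg, hg0⟩
      exact ⟨Lmc.mul hf hg, by simp [hg0]⟩
  have hconst : ∀ c : ℂ, BoundedContinuousFunction.const (Multiplicative ℝ) c ∈
      Lmc (Multiplicative ℝ) := Lmc.const
  have hM₀max : IsMaximalIdealLmc M₀ := by
    refine ⟨hM₀ideal, ?_, ?_⟩
    · intro h
      have h1 : BoundedContinuousFunction.const (Multiplicative ℝ) (1 : ℂ) ∈ M₀ := by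
        rw [h]; exact hconst 1
      simpa using h1.2
    · intro J hJ hJne hMJ
      by_contra hne
      apply hJne
      -- find f ∈ J with f 1 ≠ 0
      have : ∃ f ∈ J, f (1 : Multiplicative ℝ) ≠ 0 := by
        by_contra hall
        push_neg at hall
        apply hne
        apply Set.Subset.antisymm _ hMJ
        intro f hf
        exact ⟨hJ.subset_lmc hf, hall f hf⟩
      obtain ⟨f, hfJ, hf1⟩ := this
      set c : ℂ := f (1 : Multiplicative ℝ) with hc
      have hfL : f ∈ Lmc (Multiplicative ℝ) := hJ.subset_lmc hfJ
      -- g = f - c·1 ∈ M₀ ⊆ J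
      have hgM : f + BoundedContinuousFunction.const (Multiplicative ℝ) (-c) ∈ M₀ :=
        ⟨Lmc.add hfL (hconst (-c)), by simp [hc]⟩
      have hgJ := hMJ hgM
      -- const c ∈ J : const c = f + (-1)·g
      have hcJ : BoundedContinuousFunction.const (Multiplicative ℝ) c ∈ J := by
        have h1 : BoundedContinuousFunction.const (Multiplicative ℝ) (-1 : ℂ) *
            (f + BoundedContinuousFunction.const (Multiplicative ℝ) (-c)) ∈ J :=
          hJ.mul_mem _ (hconst (-1)) _ hgJ
        have h2 := hJ.add_mem f hfJ _ h1
        have heq : f + BoundedContinuousFunction.const (Multiplicative ℝ) (-1 : ℂ) *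
            (f + BoundedContinuousFunction.const (Multiplicative ℝ) (-c)) =
            BoundedContinuousFunction.const (Multiplicative ℝ) c := by
          ext x; simp
        rwa [heq] at h2
      -- hence J = Lmc
      apply Set.Subset.antisymm hJ.subset_lmc
      intro h hh
      have h3 : (BoundedContinuousFunction.const (Multiplicative ℝ) c⁻¹ * h) *
          BoundedContinuousFunction.const (Multiplicative ℝ) c ∈ J :=
        hJ.mul_mem _ (Lmc.mul (hconst c⁻¹) hh) _ hcJ
      have heq : (BoundedContinuousFunction.const (Multiplicative ℝ) c⁻¹ * h) *
          BoundedContinuousFunction.const (Multiplicative ℝ) c = h := by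
        ext x
        simp only [BoundedContinuousFunction.coe_mul, BoundedContinuousFunction.const_apply,
          Pi.mul_apply]
        field_simp
      rwa [heq] at h3
  have hZ : IsZFilter zFilterA := by
    constructor
    · rintro A ⟨f, ⟨hfL, _⟩, rfl⟩
      exact ⟨f, hfL, rfl⟩
    · intro h
      exact (mem_one_of_mem_zFilterA h)
    · exact ⟨0, ⟨Lmc.zero, rfl⟩, by ext x; simp⟩
    · rintro A ⟨f, ⟨hfL, hf0⟩, rfl⟩ B ⟨g, ⟨hgL, hg0⟩, rfl⟩
      refine ⟨star f * f + star g * g,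
        ⟨Lmc.add (Lmc.mul (Lmc.star_mem hfL) hfL) (Lmc.mul (Lmc.star_mem hgL) hgL),
          by simp [hf0, hg0]⟩, ?_⟩
      ext x
      simp only [Set.mem_inter_iff, Set.mem_setOf_eq, BoundedContinuousFunction.coe_add,
        BoundedContinuousFunction.coe_mul, BoundedContinuousFunction.coe_star, Pi.add_apply,
        Pi.mul_apply, Pi.star_apply]
      constructor
      · rintro ⟨h1, h2⟩; simp [h1, h2]
      · intro h
        have h1 : (starRingEnd ℂ) (f x) * f x + (starRingEnd ℂ) (g x) * g x = 0 := h
        rw [Complex.conj_mul', Complex.conj_mul'] at h1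
        have h2 : ((‖f x‖ ^ 2 + ‖g x‖ ^ 2 : ℝ) : ℂ) = 0 := by
          push_cast; exact h1
        rw [Complex.ofReal_eq_zero] at h2
        have hf2 : ‖f x‖ = 0 ∧ ‖g x‖ = 0 := by
          constructor <;> nlinarith [norm_nonneg (f x), norm_nonneg (g x),
            sq_nonneg ‖f x‖, sq_nonneg ‖g x‖]
        exact ⟨norm_eq_zero.1 hf2.1, norm_eq_zero.1 hf2.2⟩
    · rintro A ⟨f, ⟨hfL, hf0⟩, rfl⟩ B ⟨g, hgL, rfl⟩ hsub
      refine ⟨g, ⟨hgL, ?_⟩, rfl⟩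
      exact hsub hf0
  have hmem : ({(1 : Multiplicative ℝ)} : Set (Multiplicative ℝ)) ∈ zFilterA := by
    refine ⟨fmin, ⟨fmin_mem_Lmc, (fmin_zero_iff 1).2 rfl⟩, ?_⟩
    ext x
    simp only [Set.mem_singleton_iff, Set.mem_setOf_eq, fmin_zero_iff]
  have hnotmem : ({(1 : Multiplicative ℝ)} : Set (Multiplicative ℝ)) ∉ Efam (Einv zFilterA) := by
    rintro ⟨f, ⟨hfL, hfE⟩, ε, hε, hA⟩
    -- f 1 = 0
    have hf1 : f (1 : Multiplicative ℝ) = 0 := by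
      have hnorm : ∀ δ : ℝ, 0 < δ → ‖f (1 : Multiplicative ℝ)‖ ≤ δ := by
        intro δ hδ
        exact mem_one_of_mem_zFilterA (hfE δ hδ)
      by_contra hne
      have hpos : 0 < ‖f (1 : Multiplicative ℝ)‖ := norm_pos_iff.2 hne
      have := hnorm (‖f (1 : Multiplicative ℝ)‖ / 2) (by linarith)
      linarith
    -- continuity at 0 gives a nearby point in Eset ε f
    have hcont : ContinuousAt (fun t : ℝ => f (Multiplicative.ofAdd t)) 0 :=
      ((map_continuous f).comp continuous_ofAdd).continuousAt
    rw [Metric.continuousAt_iff] at hcont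
    obtain ⟨δ, hδ, hball⟩ := hcont ε hε
    have ht : dist (δ / 2) (0 : ℝ) < δ := by
      rw [Real.dist_eq, sub_zero, abs_of_pos (by linarith)]; linarith
    have := hball ht
    rw [ofAdd_zero, hf1] at this
    have hmem2 : Multiplicative.ofAdd (δ / 2) ∈ Eset ε f := by
      simp only [Eset, Set.mem_setOf_eq]
      have : dist (f (Multiplicative.ofAdd (δ / 2))) 0 < ε := by simpa using this
      rw [dist_zero_right] at this
      exact this.le
    rw [← hA, Set.mem_singleton_iff, ofAdd_eq_one] at hmem2
    linarith
  have hsub : Efam (Einv zFilterA) ⊆ zFilterA := by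
    rintro A ⟨f, ⟨hfL, hfE⟩, ε, hε, rfl⟩
    exact hfE ε hε
  exact ⟨hM₀max, hZ, hmem, hnotmem, ⟨hsub, fun h => hnotmem (h hmem)⟩⟩
end

section
/- If M is a maximal ideal of Lmc(S), then E(M) is an e-ultrafilter (a maximal e-filter); conversely, if 𝒜 is an e-ultrafilter, then E⁻(𝒜) is a maximal ideal of Lmc(S). The map M ↦ E(M) is a bijection between maximal ideals of Lmc(S) and e-ultrafilters. -/
open scoped BoundedContinuousFunction
open WeakDual

open scoped BoundedContinuousFunction
open WeakDual

namespace StmtAux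

variable {S : Type*} [TopologicalSpace S] [Mul S] [SemitopologicalSemigroup S]

lemma lTrans_apply (s : S) (f : S →ᵇ ℂ) (x : S) : lTrans s f x = f (s * x) := rfl

lemma lTrans_add (s : S) (f g : S →ᵇ ℂ) : lTrans s (f + g) = lTrans s f + lTrans s g := by
  ext x; simp [lTrans_apply]

lemma lTrans_sub (s : S) (f g : S →ᵇ ℂ) : lTrans s (f - g) = lTrans s f - lTrans s g := by
  ext x; simp [lTrans_apply]

lemma lTrans_mul (s : S) (f g : S →ᵇ ℂ) : lTrans s (f * g) = lTrans s f * lTrans s g := by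
  ext x; simp [lTrans_apply]

lemma lTrans_star (s : S) (f : S →ᵇ ℂ) : lTrans s (star f) = star (lTrans s f) := by
  ext x; simp [lTrans_apply]

lemma lTrans_algebraMap (s : S) (c : ℂ) :
    lTrans s (algebraMap ℂ (S →ᵇ ℂ) c) = algebraMap ℂ (S →ᵇ ℂ) c := by
  ext x
  simp only [lTrans_apply, Algebra.algebraMap_eq_smul_one]
  simp

lemma lTrans_norm_le (s : S) (f : S →ᵇ ℂ) : ‖lTrans s f‖ ≤ ‖f‖ :=
  BoundedContinuousFunction.norm_compContinuous_le f _

lemma zero_mem_lmc : (0 : S →ᵇ ℂ) ∈ Lmc S := by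
  intro μ
  have h : ∀ s : S, lTrans s (0 : S →ᵇ ℂ) = 0 := by intro s; ext x; simp [lTrans_apply]
  simp only [h, map_zero]
  exact continuous_const

lemma algebraMap_mem_lmc (c : ℂ) : algebraMap ℂ (S →ᵇ ℂ) c ∈ Lmc S := by
  intro μ
  simp only [lTrans_algebraMap, AlgHomClass.commutes]
  exact continuous_const

lemma one_mem_lmc : (1 : S →ᵇ ℂ) ∈ Lmc S := by
  simpa using algebraMap_mem_lmc (S := S) 1

lemma add_mem_lmc {f g : S →ᵇ ℂ} (hf : f ∈ Lmc S) (hg : g ∈ Lmc S) : f + g ∈ Lmc S := by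
  intro μ
  simp only [lTrans_add, map_add]
  exact (hf μ).add (hg μ)

lemma mul_mem_lmc {f g : S →ᵇ ℂ} (hf : f ∈ Lmc S) (hg : g ∈ Lmc S) : f * g ∈ Lmc S := by
  intro μ
  simp only [lTrans_mul, map_mul]
  exact (hf μ).mul (hg μ)

lemma star_mem_lmc {f : S →ᵇ ℂ} (hf : f ∈ Lmc S) : star f ∈ Lmc S := by
  intro μ
  have h : ∀ s : S, μ (lTrans s (star f)) = starRingEnd ℂ (μ (lTrans s f)) := by
    intro s
    rw [lTrans_star]
    exact map_star μ _
  simp only [h]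
  exact Complex.continuous_conj.comp (hf μ)

lemma smul_mem_lmc (c : ℂ) {f : S →ᵇ ℂ} (hf : f ∈ Lmc S) : c • f ∈ Lmc S := by
  have : c • f = algebraMap ℂ (S →ᵇ ℂ) c * f := by
    rw [Algebra.algebraMap_eq_smul_one, smul_mul_assoc, one_mul]
  rw [this]
  exact mul_mem_lmc (algebraMap_mem_lmc c) hf

end StmtAux
namespace StmtAux

variable {S : Type*} [TopologicalSpace S] [Mul S] [SemitopologicalSemigroup S]

lemma char_norm_le [Nonempty S] (μ : characterSpace ℂ (S →ᵇ ℂ)) (f : S →ᵇ ℂ) :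
    ‖μ f‖ ≤ ‖f‖ :=
  AlgHom.norm_apply_le_self μ f

set_option synthInstance.maxHeartbeats 400000 in
lemma isClosed_lmc [Nonempty S] : IsClosed (Lmc S) := by
  have : SequentialSpace (S →ᵇ ℂ) := by
    have : FirstCountableTopology (S →ᵇ ℂ) := inferInstance
    exact FrechetUrysohnSpace.to_sequentialSpace
  rw [← isSeqClosed_iff_isClosed]
  intro u f hu hf
  intro μ
  have key : TendstoUniformly (fun n s => (μ (lTrans s (u n)) : ℂ))
      (fun s => (μ (lTrans s f) : ℂ)) Filter.atTop := by
    rw [Metric.tendstoUniformly_iff]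
    intro ε hε
    have : ∀ᶠ n in Filter.atTop, ‖u n - f‖ < ε := by
      have h2 := Metric.tendsto_nhds.mp hf ε hε
      filter_upwards [h2] with n hn
      simpa [dist_eq_norm] using hn
    filter_upwards [this] with n hn s
    have h1 : μ (lTrans s f) - μ (lTrans s (u n)) = μ (lTrans s (f - u n)) := by
      rw [lTrans_sub, map_sub]
    rw [dist_eq_norm, h1]
    calc ‖μ (lTrans s (f - u n))‖ ≤ ‖lTrans s (f - u n)‖ := char_norm_le μ _
      _ ≤ ‖f - u n‖ := lTrans_norm_le s _
      _ = ‖u n - f‖ := by rw [norm_sub_rev]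
      _ < ε := hn
  exact key.continuous (Filter.Eventually.of_forall fun n => hu n μ).frequently
end StmtAux
namespace StmtAux

variable {S : Type*} [TopologicalSpace S] [Mul S] [SemitopologicalSemigroup S]

set_option linter.unusedSectionVars false

lemma inv_mem_lmc {f : S →ᵇ ℂ} (hf : f ∈ Lmc S) {c : ℝ} (hc : 0 < c)
    (hb : ∀ x, c ≤ ‖f x‖) : ∃ g ∈ Lmc S, f * g = 1 := by
  have hne : ∀ x, f x ≠ 0 := fun x hx => by
    have := hb x; rw [hx, norm_zero] at this; linarith
  refine ⟨BoundedContinuousFunction.ofNormedAddCommGroup (fun x => (f x)⁻¹)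
    (f.continuous.inv₀ hne) c⁻¹ ?_, ?_, ?_⟩
  · intro x
    rw [norm_inv]
    exact inv_anti₀ hc (hb x)
  · set g := BoundedContinuousFunction.ofNormedAddCommGroup (fun x => (f x)⁻¹)
      (f.continuous.inv₀ hne) c⁻¹ (fun x => by rw [norm_inv]; exact inv_anti₀ hc (hb x))
    intro μ
    have hfg : f * g = 1 := by
      ext x
      simp only [BoundedContinuousFunction.coe_mul, Pi.mul_apply,
        BoundedContinuousFunction.coe_one, Pi.one_apply]
      show f x * (f x)⁻¹ = 1
      exact mul_inv_cancel₀ (hne x)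
    have hone : ∀ s : S, μ (lTrans s f) * μ (lTrans s g) = 1 := by
      intro s
      rw [← map_mul, ← lTrans_mul, hfg]
      have : lTrans s (1 : S →ᵇ ℂ) = 1 := by ext x; simp [lTrans_apply]
      rw [this, map_one]
    have hkey : ∀ s : S, μ (lTrans s g) = (μ (lTrans s f))⁻¹ := by
      intro s
      field_simp
      have h0 : μ (lTrans s f) ≠ 0 := left_ne_zero_of_mul_eq_one (hone s)
      field_simp [h0]
      rw [mul_comm]
      exact hone s
    have : (fun s : S => (μ (lTrans s g) : ℂ)) = fun s => (μ (lTrans s f))⁻¹ :=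
      funext hkey
    rw [this]
    exact (hf μ).inv₀ (fun s => left_ne_zero_of_mul_eq_one (hone s))
  · ext x
    simp only [BoundedContinuousFunction.coe_mul, Pi.mul_apply,
      BoundedContinuousFunction.coe_one, Pi.one_apply]
    show f x * (f x)⁻¹ = 1
    exact mul_inv_cancel₀ (hne x)

lemma ideal_eq_lmc_of_one_mem {I : Set (S →ᵇ ℂ)} (hI : IsIdealLmc I)
    (h1 : (1 : S →ᵇ ℂ) ∈ I) : I = Lmc S := by
  refine subset_antisymm hI.subset_lmc (fun f hf => ?_)
  have := hI.mul_mem f hf 1 h1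
  simpa using this

lemma exists_small_of_proper {I : Set (S →ᵇ ℂ)} (hI : IsIdealLmc I) (hne : I ≠ Lmc S)
    {f : S →ᵇ ℂ} (hf : f ∈ I) {ε : ℝ} (hε : 0 < ε) : ∃ x, ‖f x‖ ≤ ε := by
  by_contra h
  push_neg at h
  obtain ⟨g, hg, hfg⟩ := inv_mem_lmc (hI.subset_lmc hf) hε (fun x => (h x).le)
  have h1 : (1 : S →ᵇ ℂ) ∈ I := by
    have := hI.mul_mem g hg f hf
    rwa [mul_comm, hfg] at this
  exact hne (ideal_eq_lmc_of_one_mem hI h1)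

end StmtAux
namespace StmtAux

variable {S : Type*} [TopologicalSpace S] [Mul S] [SemitopologicalSemigroup S]

set_option linter.unusedSectionVars false

lemma re_mem_Icc (a : S →ᵇ ℂ) (x : S) : (a x).re ∈ Set.Icc (-‖a‖) ‖a‖ := by
  have h1 : |(a x).re| ≤ ‖a x‖ := Complex.abs_re_le_norm _
  have h2 : ‖a x‖ ≤ ‖a‖ := a.norm_coe_le_norm x
  have := abs_le.mp (h1.trans h2)
  exact ⟨this.1, this.2⟩

/-- Apply a continuous real function to the real part of a bounded continuous function. -/
noncomputable def compReal (a : S →ᵇ ℂ) (ψ : ℝ → ℝ) (hψ : Continuous ψ) : S →ᵇ ℂ :=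
  ⟨⟨fun x => ((ψ ((a x).re) : ℝ) : ℂ),
    Complex.continuous_ofReal.comp (hψ.comp (Complex.continuous_re.comp a.continuous))⟩, by
    obtain ⟨C, hC⟩ := (isCompact_Icc (a := -‖a‖) (b := ‖a‖)).exists_bound_of_continuousOn
      hψ.continuousOn
    refine ⟨2 * C, fun x y => ?_⟩
    calc dist ((ψ ((a x).re) : ℝ) : ℂ) ((ψ ((a y).re) : ℝ) : ℂ)
        ≤ ‖((ψ ((a x).re) : ℝ) : ℂ)‖ + ‖((ψ ((a y).re) : ℝ) : ℂ)‖ := dist_le_norm_add_norm _ _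
      _ ≤ C + C := by
          gcongr
          · simpa using hC _ (re_mem_Icc a x)
          · simpa using hC _ (re_mem_Icc a y)
      _ = 2 * C := by ring⟩

lemma compReal_apply (a : S →ᵇ ℂ) (ψ : ℝ → ℝ) (hψ : Continuous ψ) (x : S) :
    compReal a ψ hψ x = ((ψ ((a x).re) : ℝ) : ℂ) := rfl

/-- Evaluation at a point as an `ℝ`-algebra hom. -/
noncomputable def evalHom (x : S) : (S →ᵇ ℂ) →ₐ[ℝ] ℂ where
  toFun f := f x
  map_one' := rfl
  map_mul' _ _ := rfl
  map_zero' := rfl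
  map_add' _ _ := rfl
  commutes' r := by
    simp only [Algebra.algebraMap_eq_smul_one]
    simp [BoundedContinuousFunction.coe_smul]

lemma aeval_apply (x : S) (a : S →ᵇ ℂ) (q : Polynomial ℝ) :
    (Polynomial.aeval a q) x = Polynomial.aeval (a x) q :=
  (Polynomial.aeval_algHom_apply (evalHom x) a q).symm

lemma pow_mem_lmc {f : S →ᵇ ℂ} (hf : f ∈ Lmc S) (n : ℕ) : f ^ n ∈ Lmc S := by
  induction n with
  | zero => simpa using one_mem_lmc
  | succ n ih => rw [pow_succ]; exact mul_mem_lmc ih hf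

lemma real_smul_mem_lmc (r : ℝ) {f : S →ᵇ ℂ} (hf : f ∈ Lmc S) : r • f ∈ Lmc S := by
  rw [← algebraMap_smul ℂ r f]
  exact smul_mem_lmc _ hf

lemma aeval_mem_lmc {a : S →ᵇ ℂ} (ha : a ∈ Lmc S) (q : Polynomial ℝ) :
    Polynomial.aeval a q ∈ Lmc S := by
  induction q using Polynomial.induction_on' with
  | add p q hp hq => rw [map_add]; exact add_mem_lmc hp hq
  | monomial n r =>
      rw [Polynomial.aeval_monomial]
      refine mul_mem_lmc ?_ (pow_mem_lmc ha n)
      rw [Algebra.algebraMap_eq_smul_one]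
      exact real_smul_mem_lmc r one_mem_lmc

lemma aeval_mem_ideal {M : Set (S →ᵇ ℂ)} (hI : IsIdealLmc M) {a : S →ᵇ ℂ} (ha : a ∈ M)
    (q : Polynomial ℝ) (h0 : q.eval 0 = 0) : Polynomial.aeval a q ∈ M := by
  have hdvd : Polynomial.X ∣ q := Polynomial.X_dvd_iff.mpr (by
    rwa [Polynomial.coeff_zero_eq_eval_zero])
  obtain ⟨q', rfl⟩ := hdvd
  rw [map_mul, Polynomial.aeval_X, mul_comm]
  exact hI.mul_mem _ (aeval_mem_lmc (hI.subset_lmc ha) q') a ha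

lemma compReal_mem_of_closed {M : Set (S →ᵇ ℂ)} (hclosed : IsClosed M)
    {a : S →ᵇ ℂ} (hreal : ∀ x, a x = (((a x).re : ℝ) : ℂ))
    (hpoly : ∀ q : Polynomial ℝ, q.eval 0 = 0 → Polynomial.aeval a q ∈ M)
    {ψ : ℝ → ℝ} (hψ : Continuous ψ) (hψ0 : ψ 0 = 0) :
    compReal a ψ hψ ∈ M := by
  have hcl : compReal a ψ hψ ∈ closure M := by
    rw [Metric.mem_closure_iff]
    intro θ hθ
    obtain ⟨p, hp⟩ := exists_polynomial_near_of_continuousOn (-‖a‖) ‖a‖ ψ hψ.continuousOn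
      (θ / 4) (by positivity)
    set q : Polynomial ℝ := p - Polynomial.C (p.eval 0) with hqdef
    have hq0 : q.eval 0 = 0 := by simp [hqdef]
    refine ⟨Polynomial.aeval a q, hpoly q hq0, ?_⟩
    have h00 : (0 : ℝ) ∈ Set.Icc (-‖a‖) ‖a‖ := by
      constructor
      · simpa using norm_nonneg a
      · exact norm_nonneg a
    have h0 : |p.eval 0| ≤ θ / 4 := by
      have := hp 0 h00
      rw [hψ0, sub_zero] at this
      exact this.le
    have hle : dist (compReal a ψ hψ) (Polynomial.aeval a q) ≤ θ / 2 := by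
      rw [BoundedContinuousFunction.dist_le (by positivity)]
      intro x
      set r := (a x).re with hr
      have hval : (Polynomial.aeval a q) x = ((q.eval r : ℝ) : ℂ) := by
        rw [aeval_apply, hreal x]
        have h2 := Polynomial.aeval_algebraMap_apply_eq_algebraMap_eval (A := ℂ) r q
        simpa [Complex.coe_algebraMap] using h2
      have hval2 : compReal a ψ hψ x = ((ψ r : ℝ) : ℂ) := rfl
      rw [hval, hval2, dist_eq_norm, ← Complex.ofReal_sub, Complex.norm_real,
        Real.norm_eq_abs]
      have hq : q.eval r = p.eval r - p.eval 0 := by simp [hqdef]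
      have hmem : r ∈ Set.Icc (-‖a‖) ‖a‖ := re_mem_Icc a x
      have h1 : |p.eval r - ψ r| < θ / 4 := hp _ hmem
      have hsplit : ψ r - q.eval r = (ψ r - p.eval r) + p.eval 0 := by
        rw [hq]; ring
      calc |ψ r - q.eval r| ≤ |ψ r - p.eval r| + |p.eval 0| := by
            rw [hsplit]; exact abs_add_le _ _
        _ ≤ θ / 4 + θ / 4 := by
            rw [abs_sub_comm]
            exact add_le_add h1.le h0
        _ = θ / 2 := by ring
    linarith [hle, hθ]
  rwa [hclosed.closure_eq] at hcl
end StmtAux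
namespace StmtAux

variable {S : Type*} [TopologicalSpace S] [Mul S] [SemitopologicalSemigroup S]

set_option linter.unusedSectionVars false

lemma mul_star_apply (f : S →ᵇ ℂ) (x : S) :
    (f * star f) x = ((‖f x‖ ^ 2 : ℝ) : ℂ) := by
  simp only [BoundedContinuousFunction.coe_mul, Pi.mul_apply,
    BoundedContinuousFunction.coe_star, Pi.star_apply]
  rw [RCLike.star_def, Complex.mul_conj, Complex.normSq_eq_norm_sq]
  try norm_cast

lemma mul_star_re (f : S →ᵇ ℂ) (x : S) : ((f * star f) x).re = ‖f x‖ ^ 2 := by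
  rw [mul_star_apply]; exact Complex.ofReal_re _

lemma mul_star_real (f : S →ᵇ ℂ) (x : S) :
    (f * star f) x = ((((f * star f) x).re : ℝ) : ℂ) := by
  rw [mul_star_re, mul_star_apply]

lemma mul_star_mem_lmc {f : S →ᵇ ℂ} (hf : f ∈ Lmc S) : f * star f ∈ Lmc S :=
  mul_mem_lmc hf (star_mem_lmc hf)

lemma mul_star_mem_ideal {M : Set (S →ᵇ ℂ)} (hI : IsIdealLmc M) {f : S →ᵇ ℂ} (hf : f ∈ M) :
    f * star f ∈ M := by
  rw [mul_comm]
  exact hI.mul_mem _ (star_mem_lmc (hI.subset_lmc hf)) f hf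

lemma compReal_mem_lmc [Nonempty S] {a : S →ᵇ ℂ} (ha : a ∈ Lmc S)
    (hreal : ∀ x, a x = (((a x).re : ℝ) : ℂ)) {ψ : ℝ → ℝ} (hψ : Continuous ψ) :
    compReal a ψ hψ ∈ Lmc S := by
  have hψ' : Continuous (fun t => ψ t - ψ 0) := hψ.sub continuous_const
  have hdecomp : compReal a ψ hψ
      = compReal a (fun t => ψ t - ψ 0) hψ' + algebraMap ℂ (S →ᵇ ℂ) ((ψ 0 : ℝ) : ℂ) := by
    ext x
    simp only [BoundedContinuousFunction.coe_add, Pi.add_apply, compReal_apply,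
      Algebra.algebraMap_eq_smul_one, BoundedContinuousFunction.coe_smul, Pi.smul_apply,
      BoundedContinuousFunction.coe_one, Pi.one_apply, smul_eq_mul, mul_one]
    push_cast
    try ring
  rw [hdecomp]
  refine add_mem_lmc ?_ (algebraMap_mem_lmc _)
  exact compReal_mem_of_closed isClosed_lmc hreal
    (fun q _ => aeval_mem_lmc ha q) hψ' (by simp)

lemma compReal_mem_ideal [Nonempty S] {M : Set (S →ᵇ ℂ)} (hI : IsIdealLmc M)
    (hclosed : IsClosed M) {a : S →ᵇ ℂ} (ha : a ∈ M)
    (hreal : ∀ x, a x = (((a x).re : ℝ) : ℂ)) {ψ : ℝ → ℝ} (hψ : Continuous ψ)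
    (hψ0 : ψ 0 = 0) : compReal a ψ hψ ∈ M :=
  compReal_mem_of_closed hclosed hreal (fun q h0 => aeval_mem_ideal hI ha q h0) hψ hψ0

lemma closure_isIdeal [Nonempty S] {M : Set (S →ᵇ ℂ)} (hI : IsIdealLmc M) :
    IsIdealLmc (closure M) := by
  constructor
  · have : closure M ⊆ closure (Lmc S) := closure_mono hI.subset_lmc
    rwa [isClosed_lmc.closure_eq] at this
  · exact subset_closure hI.zero_mem
  · intro f hf g hg
    rw [Metric.mem_closure_iff] at hf hg ⊢
    intro ε hε
    obtain ⟨f', hf', hdf⟩ := hf (ε / 2) (by positivity)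
    obtain ⟨g', hg', hdg⟩ := hg (ε / 2) (by positivity)
    refine ⟨f' + g', hI.add_mem _ hf' _ hg', ?_⟩
    calc dist (f + g) (f' + g') ≤ dist f f' + dist g g' := dist_add_add_le _ _ _ _
      _ < ε / 2 + ε / 2 := by exact add_lt_add hdf hdg
      _ = ε := by ring
  · intro f hf g hg
    rw [Metric.mem_closure_iff] at hg ⊢
    intro ε hε
    obtain ⟨g', hg', hdg⟩ := hg (ε / (‖f‖ + 1)) (by positivity)
    refine ⟨f * g', hI.mul_mem f hf _ hg', ?_⟩
    have : f * g - f * g' = f * (g - g') := by ring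
    rw [dist_eq_norm, this]
    calc ‖f * (g - g')‖ ≤ ‖f‖ * ‖g - g'‖ := norm_mul_le _ _
      _ ≤ ‖f‖ * dist g g' := by rw [dist_eq_norm]
      _ ≤ (‖f‖ + 1) * dist g g' := by
          apply mul_le_mul_of_nonneg_right (by linarith) dist_nonneg
      _ < (‖f‖ + 1) * (ε / (‖f‖ + 1)) := by
          exact mul_lt_mul_of_pos_left hdg (by positivity)
      _ = ε := by field_simp


end StmtAux
namespace StmtAux

variable {S : Type*} [TopologicalSpace S] [Mul S] [SemitopologicalSemigroup S]

set_option linter.unusedSectionVars false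

lemma maximal_isClosed [Nonempty S] {M : Set (S →ᵇ ℂ)} (hM : IsMaximalIdealLmc M) :
    IsClosed M := by
  have hcl : IsIdealLmc (closure M) := closure_isIdeal hM.1
  have hne : closure M ≠ Lmc S := by
    intro h
    have h1 : (1 : S →ᵇ ℂ) ∈ closure M := h ▸ one_mem_lmc
    rw [Metric.mem_closure_iff] at h1
    obtain ⟨m, hm, hdm⟩ := h1 (1 / 2) (by norm_num)
    have hlow : ∀ x, (1 : ℝ) / 2 ≤ ‖m x‖ := by
      intro x
      have h2 : ‖(1 - m : S →ᵇ ℂ) x‖ ≤ ‖(1 - m : S →ᵇ ℂ)‖ :=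
        BoundedContinuousFunction.norm_coe_le_norm _ x
      have h3 : ‖(1 - m : S →ᵇ ℂ)‖ < 1 / 2 := by rwa [dist_eq_norm] at hdm
      have h4 : (1 - m : S →ᵇ ℂ) x = 1 - m x := by
        simp [BoundedContinuousFunction.coe_sub]
      rw [h4] at h2
      have h5 : ‖(1 : ℂ)‖ - ‖m x‖ ≤ ‖(1 : ℂ) - m x‖ := norm_sub_norm_le _ _
      rw [norm_one] at h5
      linarith
    obtain ⟨x, hx⟩ := exists_small_of_proper hM.1 hM.2.1 hm (ε := 1 / 4) (by norm_num)
    have := hlow x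
    linarith
  have := hM.2.2 (closure M) hcl hne subset_closure
  rw [← this]
  exact isClosed_closure

/-- Exact representation of an intersection of two `E`-sets of ideal elements. -/
lemma inter_rep [Nonempty S] {M : Set (S →ᵇ ℂ)} (hI : IsIdealLmc M) (hclosed : IsClosed M)
    {f g : S →ᵇ ℂ} (hf : f ∈ M) (hg : g ∈ M) {ε δ : ℝ} (hε : 0 < ε) (hδ : 0 < δ) :
    ∃ k ∈ M, ∃ η : ℝ, 0 < η ∧ Eset η k = Eset ε f ∩ Eset δ g := by
  classical
  set c := min ε δ with hc
  have hcpos : 0 < c := lt_min hε hδ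
  have hψε : Continuous (fun t : ℝ => max (t - ε ^ 2) 0) :=
    (continuous_id.sub continuous_const).max continuous_const
  have hψδ : Continuous (fun t : ℝ => max (t - δ ^ 2) 0) :=
    (continuous_id.sub continuous_const).max continuous_const
  have hsqrt : Continuous Real.sqrt := Real.continuous_sqrt
  have hmin : Continuous (fun t : ℝ => min t c) := continuous_id.min continuous_const
  set m1 := compReal (f * star f) (fun t => max (t - ε ^ 2) 0) hψε with hm1
  set m2 := compReal (g * star g) (fun t => max (t - δ ^ 2) 0) hψδ with hm2
  set s1 := compReal (f * star f) Real.sqrt hsqrt with hs1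
  set s2 := compReal (g * star g) Real.sqrt hsqrt with hs2
  set σ := s1 + s2 with hσ
  have hσ_apply : ∀ x, σ x = ((‖f x‖ + ‖g x‖ : ℝ) : ℂ) := by
    intro x
    simp only [hσ, BoundedContinuousFunction.coe_add, Pi.add_apply, hs1, hs2,
      compReal_apply, mul_star_re]
    rw [Real.sqrt_sq (norm_nonneg _), Real.sqrt_sq (norm_nonneg _)]
    push_cast
    ring
  have hσreal : ∀ x, σ x = (((σ x).re : ℝ) : ℂ) := by
    intro x; rw [hσ_apply]; simp
  have hσmem : σ ∈ M := by
    refine hI.add_mem _ ?_ _ ?_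
    · exact compReal_mem_ideal hI hclosed (mul_star_mem_ideal hI hf)
        (mul_star_real f) hsqrt Real.sqrt_zero
    · exact compReal_mem_ideal hI hclosed (mul_star_mem_ideal hI hg)
        (mul_star_real g) hsqrt Real.sqrt_zero
  set τ := compReal σ (fun t => min t c) hmin with hτ
  have hτmem : τ ∈ M := compReal_mem_ideal hI hclosed hσmem hσreal hmin
    (by simp [hcpos.le])
  have hm1mem : m1 ∈ M := compReal_mem_ideal hI hclosed (mul_star_mem_ideal hI hf)
    (mul_star_real f) hψε (by show max (0 - ε ^ 2) 0 = 0; exact max_eq_right (by nlinarith [sq_nonneg ε]))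
  have hm2mem : m2 ∈ M := compReal_mem_ideal hI hclosed (mul_star_mem_ideal hI hg)
    (mul_star_real g) hψδ (by show max (0 - δ ^ 2) 0 = 0; exact max_eq_right (by nlinarith [sq_nonneg δ]))
  refine ⟨m1 + m2 + τ, hI.add_mem _ (hI.add_mem _ hm1mem _ hm2mem) _ hτmem, c, hcpos, ?_⟩
  have happly : ∀ x, (m1 + m2 + τ) x =
      ((max (‖f x‖ ^ 2 - ε ^ 2) 0 + max (‖g x‖ ^ 2 - δ ^ 2) 0
        + min (‖f x‖ + ‖g x‖) c : ℝ) : ℂ) := by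
    intro x
    simp only [BoundedContinuousFunction.coe_add, Pi.add_apply, hm1, hm2, hτ,
      compReal_apply, mul_star_re]
    rw [hσ_apply x]
    push_cast
    simp
  ext x
  have hval := happly x
  set T : ℝ := max (‖f x‖ ^ 2 - ε ^ 2) 0 + max (‖g x‖ ^ 2 - δ ^ 2) 0
      + min (‖f x‖ + ‖g x‖) c with hT
  have hTnn : 0 ≤ T := by
    have h1 : (0:ℝ) ≤ max (‖f x‖ ^ 2 - ε ^ 2) 0 := le_max_right _ _
    have h2 : (0:ℝ) ≤ max (‖g x‖ ^ 2 - δ ^ 2) 0 := le_max_right _ _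
    have h3 : (0:ℝ) ≤ min (‖f x‖ + ‖g x‖) c :=
      le_min (by positivity) hcpos.le
    linarith
  have hnorm : ‖(m1 + m2 + τ) x‖ = T := by
    rw [hval, Complex.norm_real, Real.norm_eq_abs, abs_of_nonneg hTnn]
  constructor
  · intro hx
    have hTle : T ≤ c := by
      have hx' : ‖(m1 + m2 + τ) x‖ ≤ c := hx
      rwa [hnorm] at hx'
    by_contra hnot
    have : ¬ (‖f x‖ ≤ ε ∧ ‖g x‖ ≤ δ) := hnot
    have hbig : c < ‖f x‖ + ‖g x‖ := by
      rcases not_and_or.mp this with h | h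
      · push_neg at h
        calc c ≤ ε := min_le_left _ _
          _ < ‖f x‖ := h
          _ ≤ ‖f x‖ + ‖g x‖ := by linarith [norm_nonneg (g x)]
      · push_neg at h
        calc c ≤ δ := min_le_right _ _
          _ < ‖g x‖ := h
          _ ≤ ‖f x‖ + ‖g x‖ := by linarith [norm_nonneg (f x)]
    have hpos : 0 < max (‖f x‖ ^ 2 - ε ^ 2) 0 + max (‖g x‖ ^ 2 - δ ^ 2) 0 := by
      rcases not_and_or.mp this with h | h
      · push_neg at h
        have : 0 < ‖f x‖ ^ 2 - ε ^ 2 := by nlinarith [norm_nonneg (f x)]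
        have h1 : 0 < max (‖f x‖ ^ 2 - ε ^ 2) 0 := by rw [max_eq_left this.le]; exact this
        have h2 : (0:ℝ) ≤ max (‖g x‖ ^ 2 - δ ^ 2) 0 := le_max_right _ _
        linarith
      · push_neg at h
        have : 0 < ‖g x‖ ^ 2 - δ ^ 2 := by nlinarith [norm_nonneg (g x)]
        have h1 : 0 < max (‖g x‖ ^ 2 - δ ^ 2) 0 := by rw [max_eq_left this.le]; exact this
        have h2 : (0:ℝ) ≤ max (‖f x‖ ^ 2 - ε ^ 2) 0 := le_max_right _ _
        linarith
    have hminc : min (‖f x‖ + ‖g x‖) c = c := min_eq_right hbig.le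
    rw [hT, hminc] at hTle
    linarith
  · rintro ⟨hxf, hxg⟩
    have hf' : ‖f x‖ ≤ ε := hxf
    have hg' : ‖g x‖ ≤ δ := hxg
    have h1 : max (‖f x‖ ^ 2 - ε ^ 2) 0 = 0 := max_eq_right (by nlinarith [norm_nonneg (f x)])
    have h2 : max (‖g x‖ ^ 2 - δ ^ 2) 0 = 0 := max_eq_right (by nlinarith [norm_nonneg (g x)])
    have h3 : min (‖f x‖ + ‖g x‖) c ≤ c := min_le_right _ _
    show ‖(m1 + m2 + τ) x‖ ≤ c
    rw [hnorm, hT, h1, h2]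
    linarith

end StmtAux
namespace StmtAux

variable {S : Type*} [TopologicalSpace S] [Mul S] [SemitopologicalSemigroup S]

set_option linter.unusedSectionVars false

/-- Every `E`-set of an `Lmc` function is a zero set. -/
lemma eset_isZeroSet [Nonempty S] {f : S →ᵇ ℂ} (hf : f ∈ Lmc S) {ε : ℝ} (hε : 0 < ε) :
    IsZeroSet (Eset ε f) := by
  have hψ : Continuous (fun t : ℝ => max (t - ε ^ 2) 0) :=
    (continuous_id.sub continuous_const).max continuous_const
  refine ⟨compReal (f * star f) (fun t => max (t - ε ^ 2) 0) hψ,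
    compReal_mem_lmc (mul_star_mem_lmc hf) (mul_star_real f) hψ, ?_⟩
  ext x
  simp only [Eset, Set.mem_setOf_eq, compReal_apply, mul_star_re]
  rw [Complex.ofReal_eq_zero]
  constructor
  · intro h
    exact max_eq_right (by nlinarith [norm_nonneg (f x)])
  · intro h
    have h1 : ‖f x‖ ^ 2 - ε ^ 2 ≤ 0 := by
      by_contra hc
      push_neg at hc
      rw [max_eq_left hc.le] at h
      linarith
    nlinarith [norm_nonneg (f x), hε.le]

/-- Exact representation of a zero-set superset of an `E`-set of an ideal element. -/
lemma superset_rep [Nonempty S] {M : Set (S →ᵇ ℂ)} (hI : IsIdealLmc M) (hclosed : IsClosed M)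
    {f g : S →ᵇ ℂ} (hf : f ∈ M) (hg : g ∈ Lmc S) {ε : ℝ} (hε : 0 < ε)
    (hsub : Eset ε f ⊆ {x : S | g x = 0}) :
    ∃ k ∈ M, Eset ε k = {x : S | g x = 0} := by
  have hψ : Continuous (fun t : ℝ => min (Real.sqrt t) ε) :=
    Real.continuous_sqrt.min continuous_const
  set τ := compReal (f * star f) (fun t => min (Real.sqrt t) ε) hψ with hτ
  have hτmem : τ ∈ M := compReal_mem_ideal hI hclosed (mul_star_mem_ideal hI hf)
    (mul_star_real f) hψ (by show min (Real.sqrt 0) ε = 0; rw [Real.sqrt_zero]; exact min_eq_left hε.le)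
  set ag := compReal (g * star g) Real.sqrt Real.continuous_sqrt with hag
  have hagmem : ag ∈ Lmc S :=
    compReal_mem_lmc (mul_star_mem_lmc hg) (mul_star_real g) Real.continuous_sqrt
  refine ⟨(1 + ag) * τ, hI.mul_mem _ (add_mem_lmc one_mem_lmc hagmem) _ hτmem, ?_⟩
  have happly : ∀ x, ((1 + ag) * τ) x = (((1 + ‖g x‖) * min (‖f x‖) ε : ℝ) : ℂ) := by
    intro x
    simp only [BoundedContinuousFunction.coe_mul, Pi.mul_apply,
      BoundedContinuousFunction.coe_add, Pi.add_apply, BoundedContinuousFunction.coe_one,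
      Pi.one_apply, hτ, hag, compReal_apply, mul_star_re]
    have e1 : (f x * (star f) x).re = ‖f x‖ ^ 2 := mul_star_re f x
    have e2 : (g x * (star g) x).re = ‖g x‖ ^ 2 := mul_star_re g x
    rw [e1, e2, Real.sqrt_sq (norm_nonneg _), Real.sqrt_sq (norm_nonneg _)]
    push_cast
    ring
  have hvalnn : ∀ x, (0:ℝ) ≤ (1 + ‖g x‖) * min (‖f x‖) ε := by
    intro x
    have h1 : (0:ℝ) ≤ min (‖f x‖) ε := le_min (norm_nonneg _) hε.le
    have h2 : (0:ℝ) ≤ 1 + ‖g x‖ := by linarith [norm_nonneg (g x)]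
    exact mul_nonneg h2 h1
  ext x
  have hnorm : ‖((1 + ag) * τ) x‖ = (1 + ‖g x‖) * min (‖f x‖) ε := by
    rw [happly, Complex.norm_real, Real.norm_eq_abs, abs_of_nonneg (hvalnn x)]
  simp only [Eset, Set.mem_setOf_eq]
  rw [hnorm]
  constructor
  · intro hle
    by_contra hgx
    have hfx : ε < ‖f x‖ := by
      by_contra hfx
      push_neg at hfx
      exact hgx (hsub hfx)
    have hminε : min (‖f x‖) ε = ε := min_eq_right hfx.le
    rw [hminε] at hle
    have hgpos : 0 < ‖g x‖ := norm_pos_iff.mpr hgx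
    nlinarith
  · intro hgx
    rw [hgx, norm_zero]
    have : min (‖f x‖) ε ≤ ε := min_le_right _ _
    have h1 : (0:ℝ) ≤ min (‖f x‖) ε := le_min (norm_nonneg _) hε.le
    nlinarith

end StmtAux
namespace StmtAux

variable {S : Type*} [TopologicalSpace S] [Mul S] [SemitopologicalSemigroup S]

set_option linter.unusedSectionVars false

lemma efam_superset {I J : Set (S →ᵇ ℂ)} (h : I ⊆ J) : Efam I ⊆ Efam J := by
  rintro A ⟨f, hf, ε, hε, rfl⟩
  exact ⟨f, h hf, ε, hε, rfl⟩

lemma mem_efam_of_mem {I : Set (S →ᵇ ℂ)} {f : S →ᵇ ℂ} (hf : f ∈ I) {ε : ℝ} (hε : 0 < ε) :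
    Eset ε f ∈ Efam I := ⟨f, hf, ε, hε, rfl⟩

lemma subset_einv_efam {I : Set (S →ᵇ ℂ)} (hI : I ⊆ Lmc S) : I ⊆ Einv (Efam I) :=
  fun f hf => ⟨hI hf, fun ε hε => mem_efam_of_mem hf hε⟩

/-- Maximal ideals are `e`-ideals. -/
lemma maximal_einv_efam [Nonempty S] {M : Set (S →ᵇ ℂ)} (hM : IsMaximalIdealLmc M) :
    Einv (Efam M) = M := by
  refine subset_antisymm ?_ (subset_einv_efam hM.1.subset_lmc)
  rintro f ⟨hfLmc, hE⟩
  by_contra hfM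
  -- the ideal generated by `M` and `f` is everything
  set J : Set (S →ᵇ ℂ) := {j | ∃ m ∈ M, ∃ h ∈ Lmc S, j = m + f * h} with hJ
  have hJideal : IsIdealLmc J := by
    constructor
    · rintro j ⟨m, hm, h, hh, rfl⟩
      exact add_mem_lmc (hM.1.subset_lmc hm) (mul_mem_lmc hfLmc hh)
    · exact ⟨0, hM.1.zero_mem, 0, zero_mem_lmc, by ring⟩
    · rintro j ⟨m, hm, h, hh, rfl⟩ j' ⟨m', hm', h', hh', rfl⟩
      exact ⟨m + m', hM.1.add_mem _ hm _ hm', h + h', add_mem_lmc hh hh', by ring⟩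
    · rintro k hk j ⟨m, hm, h, hh, rfl⟩
      exact ⟨k * m, hM.1.mul_mem k hk m hm, k * h, mul_mem_lmc hk hh, by ring⟩
  have hMJ : M ⊆ J := fun m hm => ⟨m, hm, 0, zero_mem_lmc, by ring⟩
  have hfJ : f ∈ J := ⟨0, hM.1.zero_mem, 1, one_mem_lmc, by ring⟩
  have hJne : J ≠ M := fun h => hfM (h ▸ hfJ)
  have hJtop : J = Lmc S := by
    by_contra hne
    exact hJne (hM.2.2 J hJideal hne hMJ)
  have h1J : (1 : S →ᵇ ℂ) ∈ J := hJtop ▸ one_mem_lmc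
  obtain ⟨m, hm, h, hh, hone⟩ := h1J
  -- get a member of `M` whose `E`-set is an `E`-set of `f` at a small level
  set δ : ℝ := 1 / (2 * (‖h‖ + 1)) with hδdef
  have hhpos : (0:ℝ) < ‖h‖ + 1 := by positivity
  have hδ : 0 < δ := by positivity
  obtain ⟨g, hg, δ', hδ', hEg⟩ := hE δ hδ
  set v := g * star g + m * star m with hv
  have hvmem : v ∈ M := hM.1.add_mem _ (mul_star_mem_ideal hM.1 hg) _
    (mul_star_mem_ideal hM.1 hm)
  have hvval : ∀ x, v x = ((‖g x‖ ^ 2 + ‖m x‖ ^ 2 : ℝ) : ℂ) := by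
    intro x
    simp only [hv, BoundedContinuousFunction.coe_add, Pi.add_apply]
    rw [mul_star_apply, mul_star_apply]
    push_cast
    ring
  set c : ℝ := min (δ' ^ 2) (1 / 4) with hc
  have hcpos : 0 < c := lt_min (by positivity) (by norm_num)
  have hbound : ∀ x, c ≤ ‖v x‖ := by
    intro x
    have hnn1 : (0:ℝ) ≤ ‖g x‖ ^ 2 := sq_nonneg _
    have hnn2 : (0:ℝ) ≤ ‖m x‖ ^ 2 := sq_nonneg _
    have hvnorm : ‖v x‖ = ‖g x‖ ^ 2 + ‖m x‖ ^ 2 := by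
      rw [hvval, Complex.norm_real, Real.norm_eq_abs, abs_of_nonneg (by linarith)]
    rw [hvnorm]
    by_cases hgx : ‖g x‖ ≤ δ'
    · -- then `x ∈ Eset δ' g = Eset δ f`, so `‖f x‖ ≤ δ` and `m x` is large
      have hxf : ‖f x‖ ≤ δ := by
        have : x ∈ Eset δ' g := hgx
        rw [← hEg] at this
        exact this
      have hmx : m x = 1 - f x * h x := by
        have hx1 : (1 : S →ᵇ ℂ) x = m x + f x * h x := by rw [hone]; rfl
        have hx2 : (1 : ℂ) = m x + f x * h x := by
          simpa using hx1
        linear_combination (-1 : ℂ) * hx2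
      have hfh : ‖f x * h x‖ ≤ 1 / 2 := by
        rw [norm_mul]
        have h1 : ‖h x‖ ≤ ‖h‖ := h.norm_coe_le_norm x
        calc ‖f x‖ * ‖h x‖ ≤ δ * (‖h‖ + 1) := by
              apply mul_le_mul hxf (by linarith) (norm_nonneg _) hδ.le
          _ = 1 / 2 := by
              rw [hδdef]
              rw [div_mul_eq_mul_div, one_mul, div_eq_div_iff (by positivity) (by norm_num)]
              ring
        
      have hmlow : (1:ℝ) / 2 ≤ ‖m x‖ := by
        rw [hmx]
        have := norm_sub_norm_le (1 : ℂ) (f x * h x)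
        rw [norm_one] at this
        linarith
      have : (1:ℝ) / 4 ≤ ‖m x‖ ^ 2 := by nlinarith
      calc c ≤ 1 / 4 := min_le_right _ _
        _ ≤ ‖g x‖ ^ 2 + ‖m x‖ ^ 2 := by linarith
    · push_neg at hgx
      have : δ' ^ 2 ≤ ‖g x‖ ^ 2 := by nlinarith
      calc c ≤ δ' ^ 2 := min_le_left _ _
        _ ≤ ‖g x‖ ^ 2 + ‖m x‖ ^ 2 := by linarith
  obtain ⟨w, hw, hvw⟩ := inv_mem_lmc (hM.1.subset_lmc hvmem) hcpos hbound
  have h1M : (1 : S →ᵇ ℂ) ∈ M := by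
    have := hM.1.mul_mem w hw v hvmem
    rwa [mul_comm, hvw] at this
  exact hM.2.1 (ideal_eq_lmc_of_one_mem hM.1 h1M)

end StmtAux
namespace StmtAux

variable {S : Type*} [TopologicalSpace S] [Mul S] [SemitopologicalSemigroup S]

set_option linter.unusedSectionVars false

lemma eset_zero_univ (ε : ℝ) (hε : 0 < ε) : Eset ε (0 : S →ᵇ ℂ) = Set.univ := by
  ext x
  simp [Eset, hε.le]

lemma eset_one_empty : Eset (1/2 : ℝ) (1 : S →ᵇ ℂ) = ∅ := by
  ext x
  simp only [Eset, Set.mem_setOf_eq, Set.mem_empty_iff_false, iff_false, not_le]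
  have : (1 : S →ᵇ ℂ) x = 1 := rfl
  rw [this, norm_one]
  norm_num

/-- `E(M)` is a `z`-filter for a maximal ideal `M`. -/
lemma zfilter_efam_maximal [Nonempty S] {M : Set (S →ᵇ ℂ)} (hM : IsMaximalIdealLmc M) :
    IsZFilter (Efam M) := by
  have hclosed := maximal_isClosed hM
  constructor
  · rintro A ⟨f, hf, ε, hε, rfl⟩
    exact eset_isZeroSet (hM.1.subset_lmc hf) hε
  · rintro ⟨f, hf, ε, hε, hempty⟩
    obtain ⟨x, hx⟩ := exists_small_of_proper hM.1 hM.2.1 hf hε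
    have : x ∈ Eset ε f := hx
    rw [← hempty] at this
    exact this
  · exact ⟨0, hM.1.zero_mem, 1, one_pos, (eset_zero_univ 1 one_pos).symm⟩
  · rintro A ⟨f, hf, ε, hε, rfl⟩ B ⟨g, hg, δ, hδ, rfl⟩
    obtain ⟨k, hk, η, hη, hkeq⟩ := inter_rep hM.1 hclosed hf hg hε hδ
    exact ⟨k, hk, η, hη, hkeq.symm⟩
  · rintro A ⟨f, hf, ε, hε, rfl⟩ B ⟨g, hg, hB⟩ hAB
    obtain ⟨k, hk, hkeq⟩ := superset_rep hM.1 hclosed hf hg hε (hB ▸ hAB)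
    exact ⟨k, hk, ε, hε, (hB ▸ hkeq.symm : B = Eset ε k)⟩

/-- `E⁻(𝒜)` is an ideal for any `z`-filter `𝒜`. -/
lemma einv_isIdeal [Nonempty S] {𝒜 : Set (Set S)} (h𝒜 : IsZFilter 𝒜) :
    IsIdealLmc (Einv 𝒜) := by
  constructor
  · exact fun f hf => hf.1
  · refine ⟨zero_mem_lmc, fun ε hε => ?_⟩
    rw [eset_zero_univ ε hε]
    exact h𝒜.univ_mem
  · rintro f ⟨hf, hfE⟩ g ⟨hg, hgE⟩
    refine ⟨add_mem_lmc hf hg, fun ε hε => ?_⟩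
    have hsub : Eset (ε/2) f ∩ Eset (ε/2) g ⊆ Eset ε (f + g) := by
      rintro x ⟨h1, h2⟩
      have h1' : ‖f x‖ ≤ ε / 2 := h1
      have h2' : ‖g x‖ ≤ ε / 2 := h2
      have : (f + g) x = f x + g x := rfl
      show ‖(f + g) x‖ ≤ ε
      rw [this]
      calc ‖f x + g x‖ ≤ ‖f x‖ + ‖g x‖ := norm_add_le _ _
        _ ≤ ε := by linarith
    have hintermem : Eset (ε/2) f ∩ Eset (ε/2) g ∈ 𝒜 :=
      h𝒜.inter_mem _ (hfE (ε/2) (by positivity)) _ (hgE (ε/2) (by positivity))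
    exact h𝒜.superset_mem _ hintermem _ (eset_isZeroSet (add_mem_lmc hf hg) hε) hsub
  · rintro f hf g ⟨hg, hgE⟩
    refine ⟨mul_mem_lmc hf hg, fun ε hε => ?_⟩
    have hδ : (0:ℝ) < ε / (‖f‖ + 1) := by positivity
    have hsub : Eset (ε / (‖f‖ + 1)) g ⊆ Eset ε (f * g) := by
      intro x hx
      have hx' : ‖g x‖ ≤ ε / (‖f‖ + 1) := hx
      have : (f * g) x = f x * g x := rfl
      show ‖(f * g) x‖ ≤ ε
      rw [this, norm_mul]
      have h1 : ‖f x‖ ≤ ‖f‖ := f.norm_coe_le_norm x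
      calc ‖f x‖ * ‖g x‖ ≤ (‖f‖ + 1) * (ε / (‖f‖ + 1)) := by
            apply mul_le_mul (by linarith) hx' (norm_nonneg _) (by positivity)
        _ = ε := by field_simp
    exact h𝒜.superset_mem _ (hgE _ hδ) _ (eset_isZeroSet (mul_mem_lmc hf hg) hε) hsub

lemma one_not_mem_einv {𝒜 : Set (Set S)} (h𝒜 : IsZFilter 𝒜) :
    (1 : S →ᵇ ℂ) ∉ Einv 𝒜 := by
  rintro ⟨-, hE⟩
  have := hE (1/2) (by norm_num)
  rw [eset_one_empty] at this
  exact h𝒜.not_empty_mem this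

lemma einv_ne_lmc {𝒜 : Set (Set S)} (h𝒜 : IsZFilter 𝒜) : Einv 𝒜 ≠ Lmc S := by
  intro h
  exact one_not_mem_einv h𝒜 (h ▸ one_mem_lmc (S := S))

/-- Part (a): `E(M)` is an `e`-ultrafilter for every maximal ideal `M`. -/
theorem efam_isEUltrafilter [Nonempty S] {M : Set (S →ᵇ ℂ)} (hM : IsMaximalIdealLmc M) :
    IsEUltrafilter (Efam M) := by
  have hEM : Einv (Efam M) = M := maximal_einv_efam hM
  refine ⟨⟨zfilter_efam_maximal hM, by rw [hEM]⟩, ?_⟩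
  intro q hq hsub
  have hqideal : IsIdealLmc (Einv q) := einv_isIdeal hq.1
  have hMq : M ⊆ Einv q := by
    intro f hf
    exact ⟨hM.1.subset_lmc hf, fun ε hε => hsub (mem_efam_of_mem hf hε)⟩
  have hEq : Einv q = M := hM.2.2 _ hqideal (einv_ne_lmc hq.1) hMq
  rw [← hq.2, hEq]

end StmtAux
namespace StmtAux

variable {S : Type*} [TopologicalSpace S] [Mul S] [SemitopologicalSemigroup S]

set_option linter.unusedSectionVars false

/-- Every proper ideal is contained in a maximal ideal. -/
lemma exists_maximal_ideal_containing {J : Set (S →ᵇ ℂ)} (hJ : IsIdealLmc J)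
    (hne : J ≠ Lmc S) : ∃ M, J ⊆ M ∧ IsMaximalIdealLmc M := by
  set 𝒮 : Set (Set (S →ᵇ ℂ)) := {I | IsIdealLmc I ∧ (1 : S →ᵇ ℂ) ∉ I} with h𝒮
  have h1J : (1 : S →ᵇ ℂ) ∉ J := fun h => hne (ideal_eq_lmc_of_one_mem hJ h)
  have hJS : J ∈ 𝒮 := ⟨hJ, h1J⟩
  have hchain : ∀ c ⊆ 𝒮, IsChain (· ⊆ ·) c → c.Nonempty → ∃ ub ∈ 𝒮, ∀ s ∈ c, s ⊆ ub := by
    intro c hc hchain ⟨I0, hI0⟩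
    refine ⟨⋃₀ c, ⟨⟨?_, ?_, ?_, ?_⟩, ?_⟩, fun s hs => Set.subset_sUnion_of_mem hs⟩
    · rintro f ⟨I, hI, hf⟩
      exact (hc hI).1.subset_lmc hf
    · exact ⟨I0, hI0, (hc hI0).1.zero_mem⟩
    · rintro f ⟨I1, hI1, hf⟩ g ⟨I2, hI2, hg⟩
      rcases hchain.total hI1 hI2 with h | h
      · exact ⟨I2, hI2, (hc hI2).1.add_mem f (h hf) g hg⟩
      · exact ⟨I1, hI1, (hc hI1).1.add_mem f hf g (h hg)⟩
    · rintro f hf g ⟨I, hI, hg⟩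
      exact ⟨I, hI, (hc hI).1.mul_mem f hf g hg⟩
    · rintro ⟨I, hI, h1⟩
      exact (hc hI).2 h1
  obtain ⟨M, hJM, hMmem, hMmax⟩ := zorn_subset_nonempty 𝒮 hchain J hJS
  refine ⟨M, hJM, hMmem.1, ?_, ?_⟩
  · intro h
    exact hMmem.2 (h ▸ one_mem_lmc (S := S))
  · intro J' hJ' hJ'ne hMJ'
    have h1J' : (1 : S →ᵇ ℂ) ∉ J' := fun h => hJ'ne (ideal_eq_lmc_of_one_mem hJ' h)
    exact subset_antisymm (hMmax ⟨hJ', h1J'⟩ hMJ') hMJ'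

/-- Part (b): `E⁻(𝒜)` is a maximal ideal for every `e`-ultrafilter `𝒜`. -/
theorem einv_isMaximal [Nonempty S] {𝒜 : Set (Set S)} (h𝒜 : IsEUltrafilter 𝒜) :
    IsMaximalIdealLmc (Einv 𝒜) := by
  have hzf := h𝒜.1.1
  refine ⟨einv_isIdeal hzf, einv_ne_lmc hzf, ?_⟩
  intro J hJ hJne hsub
  obtain ⟨M, hJM, hM⟩ := exists_maximal_ideal_containing hJ hJne
  have h𝒜M : 𝒜 ⊆ Efam M := by
    intro A hA
    rw [← h𝒜.1.2] at hA
    obtain ⟨f, hf, ε, hε, rfl⟩ := hA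
    exact mem_efam_of_mem (hJM (hsub hf)) hε
  have hq : Efam M = 𝒜 := h𝒜.2 _ (efam_isEUltrafilter hM).1 h𝒜M
  have hMeq : M = Einv 𝒜 := by
    rw [← hq]
    exact (maximal_einv_efam hM).symm
  exact subset_antisymm (hMeq ▸ hJM) hsub

end StmtAux
open StmtAux

theorem stmt14 {S : Type*} [TopologicalSpace S] [T2Space S] [Semigroup S]
    [SemitopologicalSemigroup S] :
    (∀ M : Set (S →ᵇ ℂ), IsMaximalIdealLmc M → IsEUltrafilter (Efam M)) ∧
    (∀ 𝒜 : Set (Set S), IsEUltrafilter 𝒜 → IsMaximalIdealLmc (Einv 𝒜)) ∧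
    Set.BijOn (Efam : Set (S →ᵇ ℂ) → Set (Set S))
      {M | IsMaximalIdealLmc M} {𝒜 | IsEUltrafilter 𝒜} := by
  by_cases hS : Nonempty S
  · refine ⟨fun M hM => efam_isEUltrafilter hM, fun 𝒜 h𝒜 => einv_isMaximal h𝒜,
      fun M hM => efam_isEUltrafilter hM, ?_, ?_⟩
    · intro M1 h1 M2 h2 heq
      calc M1 = Einv (Efam M1) := (maximal_einv_efam h1).symm
        _ = Einv (Efam M2) := by rw [heq]
        _ = M2 := maximal_einv_efam h2
    · intro 𝒜 h𝒜
      exact ⟨Einv 𝒜, einv_isMaximal h𝒜, h𝒜.1.2⟩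
  · have hIE : IsEmpty S := not_nonempty_iff.mp hS
    have hnoM : ∀ M : Set (S →ᵇ ℂ), ¬ IsMaximalIdealLmc M := by
      intro M hM
      apply hM.2.1
      apply subset_antisymm hM.1.subset_lmc
      intro f _
      have hf0 : f = 0 := by ext x; exact (hIE.false x).elim
      rw [hf0]
      exact hM.1.zero_mem
    have hnoA : ∀ 𝒜 : Set (Set S), ¬ IsEUltrafilter 𝒜 := by
      intro 𝒜 h
      have huniv := h.1.1.univ_mem
      have hempty : (Set.univ : Set S) = ∅ := Set.univ_eq_empty_iff.mpr hIE
      rw [hempty] at huniv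
      exact h.1.1.not_empty_mem huniv
    refine ⟨fun M hM => absurd hM (hnoM M), fun 𝒜 h => absurd h (hnoA 𝒜), ?_⟩
    have h1 : {M : Set (S →ᵇ ℂ) | IsMaximalIdealLmc M} = ∅ :=
      Set.eq_empty_iff_forall_notMem.mpr hnoM
    have h2 : {𝒜 : Set (Set S) | IsEUltrafilter 𝒜} = ∅ :=
      Set.eq_empty_iff_forall_notMem.mpr hnoA
    rw [h1, h2]
    exact Set.bijOn_empty _
end
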